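/- Let M be a separable metrizable space and let X, Y ⊆ M be disjoint sets with M = X ∪ Y. Let M(X) denote M with the topology generated by the open sets of M together with the singletons {x} for x ∈ X, and give M(X) × M(X) the product topology. Then the subset M₂ = (X × Y) ∪ (Y × X) ∪ {(x,x) : x ∈ X}, with the subspace topology inherited from M(X) × M(X), is metrizable. -/

import Mathlib

open Topology

/-- The Michael-line-like topology `M(X)`: the topology generated by the open
sets of `M` together with the singletons `{x}` for `x ∈ X`. -/
def michael {M : Type*} (t : TopologicalSpace M) (X : Set M) : TopologicalSpace M :=
  TopologicalSpace.generateFrom ({U | IsOpen[t] U} ∪ {S | ∃ x ∈ X, S = {x}})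

open Filter Set TopologicalSpace

section MichaelNhds

variable {α : Type*}

lemma michael_nhds_mem (t : TopologicalSpace α) {X : Set α} {x : α} (hx : x ∈ X) :
    @nhds α (michael t X) x = pure x := by
  letI := michael t X
  refine le_antisymm ?_ (pure_le_nhds x)
  rw [Filter.le_pure_iff]
  exact IsOpen.mem_nhds
    (TopologicalSpace.isOpen_generateFrom_of_mem (Or.inr ⟨x, hx, rfl⟩)) rfl

lemma michael_nhds_not_mem (t : TopologicalSpace α) {X : Set α} {y : α} (hy : y ∉ X) :
    @nhds α (michael t X) y = @nhds α t y := by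
  rw [michael, nhds_generateFrom, @nhds_def α t y]
  have : { s : Set α | y ∈ s ∧ s ∈ ({U | IsOpen[t] U} ∪ {S | ∃ x ∈ X, S = {x}}) }
      = { s : Set α | y ∈ s ∧ IsOpen[t] s } := by
    ext s
    simp only [mem_setOf_eq, mem_union]
    constructor
    · rintro ⟨hys, hs | ⟨x, hxX, rfl⟩⟩
      · exact ⟨hys, hs⟩
      · exact absurd (hys ▸ hxX : y ∈ X) hy
    · exact fun ⟨h1, h2⟩ => ⟨h1, Or.inl h2⟩
  rw [this]

lemma nhds_prod_eq' (T : TopologicalSpace α) (a b : α) :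
    @nhds (α × α) (@instTopologicalSpaceProd α α T T) (a, b)
      = (@nhds α T a) ×ˢ (@nhds α T b) := by
  letI := T
  exact nhds_prod_eq

end MichaelNhds

section FMetric

open scoped Classical

variable {M : Type*} [m : MetricSpace M]

/-- The auxiliary distance making all points of `X` isolated and separated from the rest. -/
noncomputable def mdist (X : Set M) (a c : M) : ℝ :=
  if a = c then 0 else if a ∈ X ∨ c ∈ X then 1 else min (dist a c) 1

lemma mdist_nonneg (X : Set M) (a c : M) : 0 ≤ mdist X a c := by
  unfold mdist
  split
  · exact le_refl 0
  split
  · exact zero_le_one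
  · exact le_min dist_nonneg zero_le_one

lemma mdist_le_one (X : Set M) (a c : M) : mdist X a c ≤ 1 := by
  unfold mdist
  split
  · exact zero_le_one
  split
  · exact le_refl 1
  · exact min_le_right _ _

lemma mdist_comm (X : Set M) (a c : M) : mdist X a c = mdist X c a := by
  unfold mdist
  rcases eq_or_ne a c with rfl | h
  · simp
  · rw [if_neg h, if_neg h.symm, dist_comm]
    by_cases hX : a ∈ X ∨ c ∈ X
    · rw [if_pos hX, if_pos hX.symm]
    · rw [if_neg hX, if_neg fun h' => hX h'.symm]

lemma mdist_triangle (X : Set M) (a b c : M) :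
    mdist X a b ≤ mdist X a c + mdist X c b := by
  by_cases hab : a = b
  · rw [show mdist X a b = 0 by unfold mdist; rw [if_pos hab]]
    exact add_nonneg (mdist_nonneg X a c) (mdist_nonneg X c b)
  by_cases hac : a = c
  · subst hac
    rw [show mdist X a a = 0 by unfold mdist; rw [if_pos rfl], zero_add]
  by_cases hcb : c = b
  · subst hcb
    rw [show mdist X c c = 0 by unfold mdist; rw [if_pos rfl], add_zero]
  rw [show mdist X a b = if a ∈ X ∨ b ∈ X then 1 else min (dist a b) 1 by
    unfold mdist; rw [if_neg hab]]
  by_cases hX : a ∈ X ∨ b ∈ X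
  · rw [if_pos hX]
    rcases hX with hX | hX
    · have : mdist X a c = 1 := by unfold mdist; rw [if_neg hac, if_pos (Or.inl hX)]
      rw [this]
      linarith [mdist_nonneg X c b]
    · have : mdist X c b = 1 := by unfold mdist; rw [if_neg hcb, if_pos (Or.inr hX)]
      rw [this]
      linarith [mdist_nonneg X a c]
  · rw [if_neg hX]
    push_neg at hX
    by_cases hcX : c ∈ X
    · have : mdist X a c = 1 := by unfold mdist; rw [if_neg hac, if_pos (Or.inr hcX)]
      rw [this]
      have := min_le_right (dist a b) 1
      linarith [mdist_nonneg X c b]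
    · have h1 : mdist X a c = min (dist a c) 1 := by
        rw [mdist, if_neg hac, if_neg (by tauto)]
      have h2 : mdist X c b = min (dist c b) 1 := by
        unfold mdist; rw [if_neg hcb, if_neg (by tauto)]
      rw [h1, h2]
      rcases le_or_gt 1 (dist a c) with h | h
      · have := min_le_right (dist a b) 1
        have h2' : (0:ℝ) ≤ min (dist c b) 1 := le_min dist_nonneg zero_le_one
        rw [min_eq_right h]
        linarith
      rcases le_or_gt 1 (dist c b) with h' | h'
      · have := min_le_right (dist a b) 1
        have h1' : (0:ℝ) ≤ min (dist a c) 1 := le_min dist_nonneg zero_le_one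
        rw [min_eq_right h']
        linarith
      · rw [min_eq_left h.le, min_eq_left h'.le]
        calc min (dist a b) 1 ≤ dist a b := min_le_left _ _
          _ ≤ dist a c + dist c b := dist_triangle a c b

lemma mdist_eq_zero (X : Set M) {a c : M} (h : mdist X a c = 0) : a = c := by
  by_contra hne
  unfold mdist at h
  rw [if_neg hne] at h
  split_ifs at h with hX
  · exact one_ne_zero h
  · rcases min_cases (dist a c) 1 with ⟨he, _⟩ | ⟨he, _⟩
    · exact hne (dist_eq_zero.mp (by rw [← he, h]))
    · rw [he] at h; exact one_ne_zero h

/-- The metric space structure with distance `mdist X`. -/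
noncomputable def fMetric (X : Set M) : MetricSpace M where
  dist := mdist X
  dist_self a := by unfold mdist; exact if_pos rfl
  dist_comm := mdist_comm X
  dist_triangle x y z := mdist_triangle X x z y
  eq_of_dist_eq_zero := mdist_eq_zero X
  edist_dist x y := rfl

/-- Topology of `fMetric`. -/
noncomputable def fTop (X : Set M) : TopologicalSpace M :=
  (fMetric X).toUniformSpace.toTopologicalSpace

lemma fball_eq {X : Set M} {y : M} (hy : y ∉ X) {ε : ℝ} (hε : 0 < ε) (hε1 : ε ≤ 1) :
    @Metric.ball M (fMetric X).toPseudoMetricSpace y ε = Metric.ball y ε ∩ Xᶜ := by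
  ext c
  show mdist X c y < ε ↔ dist c y < ε ∧ c ∈ Xᶜ
  rcases eq_or_ne c y with rfl | hne
  · simp [mdist, hε, hy]
  rw [mdist, if_neg hne]
  by_cases hX : c ∈ X ∨ y ∈ X
  · have hc : c ∈ X := hX.resolve_right hy
    rw [if_pos hX]
    simp only [mem_compl_iff, hc, not_true_eq_false, and_false, iff_false, not_lt]
    exact hε1
  · push_neg at hX
    rw [if_neg (by tauto)]
    simp only [mem_compl_iff, hX.1, not_false_eq_true, and_true]
    constructor
    · intro h
      rcases min_cases (dist c y) 1 with ⟨he, _⟩ | ⟨he, hle⟩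
      · rwa [he] at h
      · rw [he] at h; linarith
    · intro h
      exact lt_of_le_of_lt (min_le_left _ _) h

lemma fTop_nhds_mem {X : Set M} {x : M} (hx : x ∈ X) :
    @nhds M (fTop X) x = pure x := by
  refine le_antisymm ?_ (@pure_le_nhds M (fTop X) x)
  rw [Filter.le_pure_iff]
  have hball : @Metric.ball M (fMetric X).toPseudoMetricSpace x 1 = {x} := by
    ext c
    show mdist X c x < 1 ↔ c ∈ ({x} : Set M)
    rw [Set.mem_singleton_iff]
    constructor
    · intro h
      by_contra hne
      unfold mdist at h
      rw [if_neg hne, if_pos (Or.inr hx)] at h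
      exact lt_irrefl _ h
    · rintro rfl
      unfold mdist
      rw [if_pos rfl]; exact one_pos
  have := @Metric.ball_mem_nhds M (fMetric X).toPseudoMetricSpace x 1 one_pos
  rwa [hball] at this

lemma fTop_nhds_not_mem {X : Set M} {y : M} (hy : y ∉ X) :
    @nhds M (fTop X) y = 𝓝 y ⊓ 𝓟 Xᶜ := by
  have hb : (@nhds M (fTop X) y).HasBasis (fun ε : ℝ => 0 < ε)
      (fun ε => @Metric.ball M (fMetric X).toPseudoMetricSpace y ε) :=
    @Metric.nhds_basis_ball M (fMetric X).toPseudoMetricSpace y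
  have hb2 : (𝓝 y ⊓ 𝓟 Xᶜ).HasBasis (fun ε : ℝ => 0 < ε)
      (fun ε => Metric.ball y ε ∩ Xᶜ) :=
    Metric.nhds_basis_ball.inf_principal _
  refine le_antisymm ?_ ?_
  · rw [hb.le_basis_iff hb2]
    intro ε hε
    refine ⟨min ε 1, lt_min hε one_pos, ?_⟩
    rw [fball_eq hy (lt_min hε one_pos) (min_le_right _ _)]
    exact Set.inter_subset_inter_left _ (Metric.ball_subset_ball (min_le_left _ _))
  · rw [hb2.le_basis_iff hb]
    intro ε hε
    refine ⟨min ε 1, lt_min hε one_pos, ?_⟩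
    rintro c ⟨hc1, hc2⟩
    show mdist X c y < ε
    unfold mdist
    rcases eq_or_ne c y with rfl | hne
    · rw [if_pos rfl]; exact hε
    · rw [if_neg hne, if_neg (by simp only [Set.mem_compl_iff] at hc2; tauto : ¬(c ∈ X ∨ y ∈ X))]
      have hc1' : dist c y < min ε 1 := hc1
      exact lt_of_le_of_lt (min_le_left _ _) (lt_of_lt_of_le hc1' (min_le_left _ _))

end FMetric

/-- A set in a square of a metric space is metrizable (with explicit topology terms). -/
lemma helper_metrizable {A : Type*} (mA : MetricSpace A) (s : Set (A × A)) :
    @TopologicalSpace.MetrizableSpace s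
      (TopologicalSpace.induced (Subtype.val : s → A × A)
        (@instTopologicalSpaceProd A A mA.toUniformSpace.toTopologicalSpace
          mA.toUniformSpace.toTopologicalSpace)) := by
  letI := mA
  exact TopologicalSpace.MetrizableSpace.subtype s

theorem aux_metrizable {M : Type*} [m : MetricSpace M] (X : Set M) :
    @TopologicalSpace.MetrizableSpace
      ↥((X ×ˢ Xᶜ) ∪ (Xᶜ ×ˢ X) ∪ {p : M × M | p.1 ∈ X ∧ p.1 = p.2})
      (@instTopologicalSpaceSubtype (M × M) _
        (@instTopologicalSpaceProd M M (michael m.toUniformSpace.toTopologicalSpace X)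
          (michael m.toUniformSpace.toTopologicalSpace X))) := by
  set S : Set (M × M) := (X ×ˢ Xᶜ) ∪ (Xᶜ ×ˢ X) ∪ {p : M × M | p.1 ∈ X ∧ p.1 = p.2} with hS
  have hkey : (@instTopologicalSpaceSubtype (M × M) (· ∈ S)
        (@instTopologicalSpaceProd M M (michael (@UniformSpace.toTopologicalSpace M (@PseudoMetricSpace.toUniformSpace M (@MetricSpace.toPseudoMetricSpace M m))) X) (michael (@UniformSpace.toTopologicalSpace M (@PseudoMetricSpace.toUniformSpace M (@MetricSpace.toPseudoMetricSpace M m))) X)))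
      = TopologicalSpace.induced (Subtype.val : S → M × M)
        (@instTopologicalSpaceProd M M (fTop X) (fTop X)) := by
    refine TopologicalSpace.ext_nhds fun p => ?_
    rw [show (@instTopologicalSpaceSubtype (M × M) (· ∈ S)
          (@instTopologicalSpaceProd M M (michael (@UniformSpace.toTopologicalSpace M (@PseudoMetricSpace.toUniformSpace M (@MetricSpace.toPseudoMetricSpace M m))) X) (michael (@UniformSpace.toTopologicalSpace M (@PseudoMetricSpace.toUniformSpace M (@MetricSpace.toPseudoMetricSpace M m))) X)))
        = TopologicalSpace.induced (Subtype.val : S → M × M)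
          (@instTopologicalSpaceProd M M (michael (@UniformSpace.toTopologicalSpace M (@PseudoMetricSpace.toUniformSpace M (@MetricSpace.toPseudoMetricSpace M m))) X) (michael (@UniformSpace.toTopologicalSpace M (@PseudoMetricSpace.toUniformSpace M (@MetricSpace.toPseudoMetricSpace M m))) X)) from rfl]
    rw [@nhds_induced (M × M) S (@instTopologicalSpaceProd M M (michael (@UniformSpace.toTopologicalSpace M (@PseudoMetricSpace.toUniformSpace M (@MetricSpace.toPseudoMetricSpace M m))) X) (michael (@UniformSpace.toTopologicalSpace M (@PseudoMetricSpace.toUniformSpace M (@MetricSpace.toPseudoMetricSpace M m))) X)) Subtype.val p,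
      @nhds_induced (M × M) S (@instTopologicalSpaceProd M M (fTop X) (fTop X)) Subtype.val p]
    obtain ⟨⟨a, b⟩, hp⟩ := p
    simp only
    rw [nhds_prod_eq' (michael (@UniformSpace.toTopologicalSpace M (@PseudoMetricSpace.toUniformSpace M (@MetricSpace.toPseudoMetricSpace M m))) X) a b, nhds_prod_eq' (fTop X) a b]
    by_cases ha : a ∈ X <;> by_cases hb : b ∈ X
    · rw [michael_nhds_mem _ ha, michael_nhds_mem _ hb, fTop_nhds_mem ha, fTop_nhds_mem hb]
    · rw [michael_nhds_mem _ ha, michael_nhds_not_mem _ hb, fTop_nhds_mem ha,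
        fTop_nhds_not_mem hb]
      have h1 : pure a ×ˢ (𝓝 b ⊓ 𝓟 Xᶜ) = (pure a ×ˢ 𝓝 b) ⊓ 𝓟 (Set.univ ×ˢ Xᶜ) :=
        calc pure a ×ˢ (𝓝 b ⊓ 𝓟 Xᶜ) = (pure a ⊓ ⊤) ×ˢ (𝓝 b ⊓ 𝓟 Xᶜ) := by rw [inf_top_eq]
          _ = (pure a ×ˢ 𝓝 b) ⊓ (⊤ ×ˢ 𝓟 Xᶜ) := Filter.prod_inf_prod.symm
          _ = (pure a ×ˢ 𝓝 b) ⊓ 𝓟 (Set.univ ×ˢ Xᶜ) := by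
              rw [← Filter.principal_univ, Filter.prod_principal_principal]
      rw [h1, Filter.comap_inf, Filter.comap_principal]
      refine (inf_eq_left.mpr ?_).symm
      rw [Filter.le_principal_iff]
      refine Filter.mem_comap.mpr ⟨({a} : Set M) ×ˢ ({a}ᶜ : Set M),
        Filter.prod_mem_prod (Filter.mem_pure.mpr rfl)
          (compl_singleton_mem_nhds (show b ≠ a from fun h => hb (by rw [h]; exact ha))), ?_⟩
      rintro ⟨⟨c, e⟩, hs⟩ ⟨hc, he⟩
      simp only [Set.mem_singleton_iff] at hc
      simp only [Set.mem_compl_iff, Set.mem_singleton_iff] at he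
      refine ⟨trivial, ?_⟩
      rcases hs with (⟨h1', h2'⟩ | ⟨h1', h2'⟩) | ⟨h1', h2'⟩
      · exact h2'
      · exact absurd (show c ∈ X by rw [hc]; exact ha) h1'
      · exact absurd (h2'.symm.trans hc) he
    · rw [michael_nhds_not_mem _ ha, michael_nhds_mem _ hb, fTop_nhds_not_mem ha,
        fTop_nhds_mem hb]
      have h1 : (𝓝 a ⊓ 𝓟 Xᶜ) ×ˢ pure b = (𝓝 a ×ˢ pure b) ⊓ 𝓟 (Xᶜ ×ˢ Set.univ) :=
        calc (𝓝 a ⊓ 𝓟 Xᶜ) ×ˢ pure b = (𝓝 a ⊓ 𝓟 Xᶜ) ×ˢ (pure b ⊓ ⊤) := by rw [inf_top_eq]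
          _ = (𝓝 a ×ˢ pure b) ⊓ (𝓟 Xᶜ ×ˢ ⊤) := Filter.prod_inf_prod.symm
          _ = (𝓝 a ×ˢ pure b) ⊓ 𝓟 (Xᶜ ×ˢ Set.univ) := by
              rw [← Filter.principal_univ, Filter.prod_principal_principal]
      rw [h1, Filter.comap_inf, Filter.comap_principal]
      refine (inf_eq_left.mpr ?_).symm
      rw [Filter.le_principal_iff]
      refine Filter.mem_comap.mpr ⟨({b}ᶜ : Set M) ×ˢ ({b} : Set M),
        Filter.prod_mem_prod (compl_singleton_mem_nhds (show a ≠ b from fun h => ha (by rw [h]; exact hb)))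
          (Filter.mem_pure.mpr rfl), ?_⟩
      rintro ⟨⟨c, e⟩, hs⟩ ⟨hc, he⟩
      simp only [Set.mem_compl_iff, Set.mem_singleton_iff] at hc
      simp only [Set.mem_singleton_iff] at he
      refine ⟨?_, trivial⟩
      rcases hs with (⟨h1', h2'⟩ | ⟨h1', h2'⟩) | ⟨h1', h2'⟩
      · exact absurd (show e ∈ X by rw [he]; exact hb) h2'
      · exact h1'
      · exact absurd (h2'.trans he) hc
    · exfalso
      rcases hp with (⟨h1', h2'⟩ | ⟨h1', h2'⟩) | ⟨h1', h2'⟩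
      · exact ha h1'
      · exact hb h2'
      · exact ha h1'
  rw [hkey]
  exact helper_metrizable (fMetric X) S

/-- If `M` is a separable metrizable space, `M = X ∪ Y` with `X, Y` disjoint, then
`M₂ = (X × Y) ∪ (Y × X) ∪ {(x,x) : x ∈ X}` is a metrizable subspace of
`M(X) × M(X)`. -/
theorem stmt13 {M : Type*} [t : TopologicalSpace M] [TopologicalSpace.MetrizableSpace M]
    [TopologicalSpace.SeparableSpace M]
    (X Y : Set M) (hdisj : Disjoint X Y) (hcover : X ∪ Y = Set.univ) :
    @TopologicalSpace.MetrizableSpace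
      ↥((X ×ˢ Y) ∪ (Y ×ˢ X) ∪ {p : M × M | p.1 ∈ X ∧ p.1 = p.2})
      (@instTopologicalSpaceSubtype (M × M) _
        (@instTopologicalSpaceProd M M (michael t X) (michael t X))) := by
  have hY : Y = Xᶜ := by
    apply Set.Subset.antisymm
    · exact Set.subset_compl_iff_disjoint_left.mpr hdisj
    · intro z hz
      rcases (hcover ▸ Set.mem_univ z : z ∈ X ∪ Y) with h | h
      · exact absurd h hz
      · exact h
  subst hY
  obtain ⟨m, hm⟩ : ∃ m : MetricSpace M, m.toUniformSpace.toTopologicalSpace = t :=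
    ⟨TopologicalSpace.metrizableSpaceMetric M, rfl⟩
  subst hm
  exact @aux_metrizable M m X
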